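/- For n ∈ ℕ and z > 0, the analytically continued Volterra function at β = −n−1 satisfies μ(z, −n−1, α) = (−1)^n (d^n/dx^n)[ z^{α+x} / Γ(α+x+1) ] evaluated at x = 0. -/

import Mathlib

open MeasureTheory Set Real Filter Nat Topology



-- Cauchy estimate
lemma cauchy_bound {f : ℂ → ℂ} (hf : Differentiable ℂ f) (m : ℕ) (c : ℂ) {M : ℝ}
    (hM : ∀ w : ℂ, w ∈ Metric.sphere c 1 → ‖f w‖ ≤ M) :
    ‖iteratedDeriv m f c‖ ≤ (m ! : ℝ) * M := by
  have hpb := hf.hasFPowerSeriesOnBall c (R := 1) one_pos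
  set p := cauchyPowerSeries f c 1 with hp
  have h1 : (m ! : ℝ) * ‖p m (fun _ : Fin m => (1:ℂ))‖ = ‖iteratedDeriv m f c‖ := by
    rw [iteratedDeriv_eq_iteratedFDeriv, ← hpb.factorial_smul (1:ℂ) m]
    simp [norm_smul, hp]
  have h2 : ‖p m (fun _ : Fin m => (1:ℂ))‖ ≤ ‖p m‖ := by
    simpa using (p m).le_opNorm (fun _ : Fin m => (1:ℂ))
  have h3 : ‖p m‖ ≤ ((2 * π)⁻¹ * ∫ θ : ℝ in (0)..2 * π, ‖f (circleMap c 1 θ)‖) * |(1:ℝ)|⁻¹ ^ m :=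
    norm_cauchyPowerSeries_le f c 1 m
  have h4 : (∫ θ : ℝ in (0)..2 * π, ‖f (circleMap c 1 θ)‖) ≤ ∫ _ : ℝ in (0)..2 * π, M := by
    apply intervalIntegral.integral_mono_on Real.two_pi_pos.le
    · exact ((hf.continuous.comp (continuous_circleMap c 1)).norm).intervalIntegrable _ _
    · exact intervalIntegrable_const
    · intro θ _
      exact hM _ (circleMap_mem_sphere c one_pos.le θ)
  rw [← h1]
  have h5 : ‖p m‖ ≤ M := by
    have : ((2 * π)⁻¹ * ∫ θ : ℝ in (0)..2 * π, ‖f (circleMap c 1 θ)‖) * |(1:ℝ)|⁻¹ ^ m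
        ≤ (2 * π)⁻¹ * (2 * π * M) := by
      simp only [abs_one, inv_one, one_pow, mul_one]
      apply mul_le_mul_of_nonneg_left _ (by positivity)
      simpa using h4
    refine h3.trans (this.trans (le_of_eq ?_))
    field_simp
  calc (m ! : ℝ) * ‖p m (fun _ : Fin m => (1:ℂ))‖ ≤ (m ! : ℝ) * ‖p m‖ := by
        exact mul_le_mul_of_nonneg_left h2 (by positivity)
    _ ≤ (m ! : ℝ) * M := mul_le_mul_of_nonneg_left h5 (by positivity)

lemma sum_sq_le (n : ℕ) : ∑ j ∈ Finset.range n, (1 / ((j:ℝ) + 1)) ^ 2 ≤ 2 - 2 / ((n:ℝ) + 1) := by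
  induction n with
  | zero => norm_num
  | succ n ih =>
    rw [Finset.sum_range_succ]
    have h1 : (1 / ((n:ℝ) + 1)) ^ 2 ≤ 2 / ((n:ℝ)+1) - 2/((n:ℝ)+2) := by
      rw [div_sub_div _ _ (by positivity) (by positivity)]
      rw [div_pow, one_pow, div_le_div_iff₀ (by positivity) (by positivity)]
      ring_nf
      nlinarith [sq_nonneg ((n:ℝ)+1)]
    push_cast
    have h2 : ((n:ℝ) + 1 + 1) = (n:ℝ) + 2 := by ring
    rw [h2]
    linarith

lemma sum_inv_sq_le {x : ℝ} (hx : 1 ≤ x) (n : ℕ) :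
    ∑ j ∈ Finset.range n, (1 / (x + (j:ℝ))) ^ 2 ≤ 2 := by
  have h : ∀ j ∈ Finset.range n, (1 / (x + (j:ℝ))) ^ 2 ≤ (1 / ((j:ℝ) + 1)) ^ 2 := by
    intro j _
    have h1 : (0:ℝ) < (j:ℝ) + 1 := by positivity
    have h2 : (j:ℝ) + 1 ≤ x + j := by linarith
    gcongr
  calc _ ≤ ∑ j ∈ Finset.range n, (1 / ((j:ℝ) + 1)) ^ 2 := Finset.sum_le_sum h
    _ ≤ 2 - 2 / ((n:ℝ)+1) := sum_sq_le n
    _ ≤ 2 := sub_le_self _ (by positivity)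

lemma gamma_lower {s : ℂ} (hre : 1 ≤ s.re) (him : |s.im| ≤ 1) :
    Real.exp (-1) * Real.Gamma s.re ≤ ‖Complex.Gamma s‖ := by
  set x := s.re
  set y := s.im
  have hx0 : (0:ℝ) < x := lt_of_lt_of_le one_pos hre
  -- key bound on GammaSeq norms
  have key : ∀ n : ℕ, 1 ≤ n → Real.exp (-1) * Real.GammaSeq x n ≤ ‖Complex.GammaSeq s n‖ := by
    intro n hn
    have hnpos : (0:ℝ) < n := by exact_mod_cast hn
    -- norm of numerator
    have hnum : ‖(n:ℂ) ^ s * (n ! : ℂ)‖ = (n:ℝ) ^ x * (n ! : ℝ) := by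
      rw [norm_mul]
      congr 1
      · have : ((n:ℂ)) = (((n:ℝ)):ℂ) := by norm_cast
        rw [this, Complex.norm_cpow_eq_rpow_re_of_pos hnpos]
      · simp
    -- pointwise bound on factors
    have hfac : ∀ j : ℕ, ‖s + (j:ℂ)‖ ≤ (x + j) * Real.exp ((1/2) * (1 / (x + (j:ℝ)))^2) := by
      intro j
      have hxj : (0:ℝ) < x + j := by positivity
      have habs : ‖s + (j:ℂ)‖ = Real.sqrt ((x + j)^2 + y^2) := by
        rw [Complex.norm_def, Complex.normSq_apply]
        simp [x, y]
        ring_nf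
      rw [habs]
      rw [show (x + (j:ℝ)) * Real.exp ((1/2) * (1 / (x + (j:ℝ)))^2)
          = Real.sqrt (((x + j) * Real.exp ((1/2) * (1 / (x + (j:ℝ)))^2))^2) by
        rw [Real.sqrt_sq (by positivity)]]
      apply Real.sqrt_le_sqrt
      have h1 : (1 / (x + (j:ℝ)))^2 + 1 ≤ Real.exp ((1 / (x + (j:ℝ)))^2) :=
        Real.add_one_le_exp _
      have hy2 : y^2 ≤ 1 := by
        have := sq_abs y
        nlinarith [abs_nonneg y]
      have key : ((x + j) * Real.exp ((1/2) * (1 / (x + (j:ℝ)))^2))^2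
          = (x+j)^2 * Real.exp ((1 / (x + (j:ℝ)))^2) := by
        rw [mul_pow, sq (Real.exp _), ← Real.exp_add]
        ring_nf
      rw [key]
      have haux : (x+(j:ℝ))^2 * (1/(x+(j:ℝ)))^2 = 1 := by
        field_simp
      nlinarith [sq_nonneg (x+(j:ℝ))]
    -- product bound
    have hprodnn : ∀ j ∈ Finset.range (n+1), (0:ℝ) ≤ x + (j:ℕ) := by
      intro j _; positivity
    have hprod : ∏ j ∈ Finset.range (n+1), ‖s + (j:ℂ)‖
        ≤ (∏ j ∈ Finset.range (n+1), (x + (j:ℝ))) * Real.exp 1 := by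
      calc ∏ j ∈ Finset.range (n+1), ‖s + (j:ℂ)‖
          ≤ ∏ j ∈ Finset.range (n+1), ((x + (j:ℝ)) * Real.exp ((1/2) * (1 / (x + (j:ℝ)))^2)) :=
            Finset.prod_le_prod (fun j _ => norm_nonneg _) (fun j _ => hfac j)
        _ = (∏ j ∈ Finset.range (n+1), (x + (j:ℝ)))
            * ∏ j ∈ Finset.range (n+1), Real.exp ((1/2) * (1 / (x + (j:ℝ)))^2) :=
            Finset.prod_mul_distrib
        _ = (∏ j ∈ Finset.range (n+1), (x + (j:ℝ)))
            * Real.exp (∑ j ∈ Finset.range (n+1), (1/2) * (1 / (x + (j:ℝ)))^2) := by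
            rw [Real.exp_sum]
        _ ≤ (∏ j ∈ Finset.range (n+1), (x + (j:ℝ))) * Real.exp 1 := by
            have hs : ∑ j ∈ Finset.range (n+1), (1/2) * (1 / (x + (j:ℝ)))^2 ≤ 1 := by
              rw [← Finset.mul_sum]
              have := sum_inv_sq_le hre (n+1)
              linarith
            have hP : (0:ℝ) ≤ ∏ j ∈ Finset.range (n+1), (x + (j:ℝ)) :=
              Finset.prod_nonneg (fun j _ => by positivity)
            exact mul_le_mul_of_nonneg_left (Real.exp_le_exp.2 hs) hP
    -- positivity of products
    have hPpos : (0:ℝ) < ∏ j ∈ Finset.range (n+1), (x + (j:ℝ)) :=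
      Finset.prod_pos (fun j _ => by positivity)
    have hle : ∀ j : ℕ, (x + (j:ℝ)) ≤ ‖s + (j:ℂ)‖ := by
      intro j
      have : (s + (j:ℂ)).re = x + j := by simp [x]
      calc x + (j:ℝ) = (s + (j:ℂ)).re := this.symm
        _ ≤ |(s + (j:ℂ)).re| := le_abs_self _
        _ ≤ ‖s + (j:ℂ)‖ := Complex.abs_re_le_norm _
    have hQpos : (0:ℝ) < ∏ j ∈ Finset.range (n+1), ‖s + (j:ℂ)‖ :=
      lt_of_lt_of_le hPpos (Finset.prod_le_prod (fun j _ => by positivity) (fun j _ => hle j))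
    -- norms
    have hnorm : ‖Complex.GammaSeq s n‖
        = ((n:ℝ) ^ x * (n ! : ℝ)) / ∏ j ∈ Finset.range (n+1), ‖s + (j:ℂ)‖ := by
      rw [Complex.GammaSeq, norm_div, hnum, norm_prod]
    have hreal : Real.GammaSeq x n
        = ((n:ℝ) ^ x * (n ! : ℝ)) / ∏ j ∈ Finset.range (n+1), (x + (j:ℝ)) := rfl
    rw [hnorm, hreal]
    have hAnn : (0:ℝ) ≤ (n:ℝ) ^ x * (n ! : ℝ) := by positivity
    have step : ((n:ℝ) ^ x * (n ! : ℝ)) / (Real.exp 1 * ∏ j ∈ Finset.range (n+1), (x + (j:ℝ)))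
        ≤ ((n:ℝ) ^ x * (n ! : ℝ)) / ∏ j ∈ Finset.range (n+1), ‖s + (j:ℂ)‖ := by
      apply div_le_div_of_nonneg_left hAnn hQpos
      calc ∏ j ∈ Finset.range (n+1), ‖s + (j:ℂ)‖
          ≤ (∏ j ∈ Finset.range (n+1), (x + (j:ℝ))) * Real.exp 1 := hprod
        _ = Real.exp 1 * ∏ j ∈ Finset.range (n+1), (x + (j:ℝ)) := mul_comm _ _
    refine le_trans (le_of_eq ?_) step
    rw [Real.exp_neg]
    field_simp
  -- take limits
  have h1 : Tendsto (fun n => ‖Complex.GammaSeq s n‖) atTop (𝓝 ‖Complex.Gamma s‖) :=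
    (Complex.GammaSeq_tendsto_Gamma s).norm
  have h2 : Tendsto (fun n => Real.exp (-1) * Real.GammaSeq x n) atTop
      (𝓝 (Real.exp (-1) * Real.Gamma x)) :=
    (Real.GammaSeq_tendsto_Gamma x).const_mul _
  exact le_of_tendsto_of_tendsto h2 h1 (Filter.eventually_atTop.2 ⟨1, fun n hn => key n hn⟩)

noncomputable def Fc (z α : ℝ) : ℂ → ℂ :=
  fun w => Complex.exp ((↑α + w) * (Real.log z : ℂ)) * (Complex.Gamma (↑α + w + 1))⁻¹

lemma Fc_diff (z α : ℝ) : Differentiable ℂ (Fc z α) := by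
  apply Differentiable.mul
  · exact Complex.differentiable_exp.comp ((differentiable_const _).add differentiable_id |>.mul (differentiable_const _))
  · exact Complex.differentiable_one_div_Gamma.comp (((differentiable_const _).add differentiable_id).add_const _)

lemma Fc_real (z α : ℝ) (hz : 0 < z) (x : ℝ) :
    Fc z α x = ((z ^ (α + x) / Real.Gamma (α + x + 1) : ℝ) : ℂ) := by
  unfold Fc
  have h0 : ((α:ℂ) + x) * (Real.log z : ℂ) = (((α + x) * Real.log z : ℝ) : ℂ) := by push_cast; ring
  have h1 : ((α:ℂ) + x + 1) = ((α + x + 1 : ℝ) : ℂ) := by push_cast; ring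
  rw [h0, h1, Complex.Gamma_ofReal, ← Complex.ofReal_exp]
  rw [show z ^ (α + x) = Real.exp ((α + x) * Real.log z) by
    rw [Real.rpow_def_of_pos hz, mul_comm]]
  push_cast
  rw [div_eq_mul_inv]

lemma Fc_norm (z α : ℝ) (w : ℂ) :
    ‖Fc z α w‖ = Real.exp ((α + w.re) * Real.log z) * ‖Complex.Gamma (↑α + w + 1)‖⁻¹ := by
  unfold Fc
  rw [norm_mul, norm_inv, Complex.norm_exp]
  congr 2
  simp [Complex.add_re, Complex.mul_re]

lemma gamma_step {K : ℝ} (hK : 2 ≤ K) :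
    ∀ (n : ℕ) {t : ℝ}, K ≤ t → K ^ n * Real.Gamma t ≤ Real.Gamma (t + n) := by
  intro n
  induction n with
  | zero => intro t _; simp
  | succ n ih =>
    intro t ht
    have htpos : 0 < t := lt_of_lt_of_le (by linarith) ht
    have htn : t + n ≠ 0 := by positivity
    have h1 : Real.Gamma (t + (n+1 : ℕ)) = (t + n) * Real.Gamma (t + n) := by
      rw [show (t + ((n:ℕ)+1:ℕ) : ℝ) = (t + n) + 1 by push_cast; ring]
      exact Real.Gamma_add_one htn
    rw [h1]
    have h2 : K ^ n * Real.Gamma t ≤ Real.Gamma (t + n) := ih ht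
    have h3 : 0 < Real.Gamma t := Real.Gamma_pos_of_pos htpos
    have h4 : K ≤ t + n := by
      have : (0:ℝ) ≤ n := Nat.cast_nonneg n
      linarith
    have h5 : 0 ≤ K ^ n * Real.Gamma t := by positivity
    calc K ^ (n+1) * Real.Gamma t = K * (K ^ n * Real.Gamma t) := by ring
      _ ≤ (t + n) * (K ^ n * Real.Gamma t) := by
          apply mul_le_mul_of_nonneg_right h4 h5
      _ ≤ (t + n) * Real.Gamma (t + n) := by
          apply mul_le_mul_of_nonneg_left h2 (by linarith)

lemma decay (z α : ℝ) (hz : 0 < z) (m : ℕ) :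
    ∃ C X : ℝ, 0 ≤ C ∧ 1 ≤ X ∧ ∀ x : ℝ, X ≤ x →
      ‖iteratedDeriv m (Fc z α) (x:ℂ)‖ ≤ C * (1/2:ℝ) ^ x := by
  set K : ℝ := max (2*z) 2 with hKdef
  have hK2 : 2 ≤ K := le_max_right _ _
  have hKz : 2*z ≤ K := le_max_left _ _
  have hKpos : (0:ℝ) < K := by linarith
  set X : ℝ := K + |α| + 4 with hXdef
  have habs : 0 ≤ |α| := abs_nonneg α
  have hX1 : 1 ≤ X := by simp only [hXdef]; linarith
  have hGX : 0 < Real.Gamma (α + X) := by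
    apply Real.Gamma_pos_of_pos
    have := neg_abs_le α
    simp only [hXdef]; linarith
  refine ⟨(m ! : ℝ) * (Real.exp (|Real.log z| + 1) * (z ^ α * K ^ (X+1) / Real.Gamma (α + X))),
    X, by positivity, hX1, ?_⟩
  intro x hx
  have hax : K + 4 ≤ α + x := by
    have := neg_abs_le α
    simp only [hXdef] at hx; linarith
  have hax2 : (2:ℝ) ≤ α + x := by linarith
  have hGax : 0 < Real.Gamma (α + x) := Real.Gamma_pos_of_pos (by linarith)
  -- step 1 : Cauchy bound with M = sup on circle
  have hM : ∀ w : ℂ, w ∈ Metric.sphere (x:ℂ) 1 →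
      ‖Fc z α w‖ ≤ Real.exp ((α + x) * Real.log z + |Real.log z|) *
        (Real.exp 1 / Real.Gamma (α + x)) := by
    intro w hw
    have hdist : ‖w - (x:ℂ)‖ = 1 := by
      simpa [Complex.dist_eq] using hw
    have hre : |w.re - x| ≤ 1 := by
      calc |w.re - x| = |(w - (x:ℂ)).re| := by simp
        _ ≤ ‖w - (x:ℂ)‖ := Complex.abs_re_le_norm _
        _ = 1 := hdist
    have him : |w.im| ≤ 1 := by
      calc |w.im| = |(w - (x:ℂ)).im| := by simp
        _ ≤ ‖w - (x:ℂ)‖ := Complex.abs_im_le_norm _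
        _ = 1 := hdist
    have hre1 : x - 1 ≤ w.re := by cases abs_le.1 hre with | intro h1 h2 => linarith
    have hre2 : w.re ≤ x + 1 := by cases abs_le.1 hre with | intro h1 h2 => linarith
    rw [Fc_norm]
    have hexp : Real.exp ((α + w.re) * Real.log z)
        ≤ Real.exp ((α + x) * Real.log z + |Real.log z|) := by
      apply Real.exp_le_exp.2
      have h1 : (α + w.re) * Real.log z - (α + x) * Real.log z = (w.re - x) * Real.log z := by ring
      have h2 : (w.re - x) * Real.log z ≤ |Real.log z| := by
        calc (w.re - x) * Real.log z ≤ |(w.re - x) * Real.log z| := le_abs_self _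
          _ = |w.re - x| * |Real.log z| := abs_mul _ _
          _ ≤ 1 * |Real.log z| := by
              apply mul_le_mul_of_nonneg_right hre (abs_nonneg _)
          _ = |Real.log z| := one_mul _
      linarith
    have hsre : ((α:ℂ) + w + 1).re = α + w.re + 1 := by simp
    have hGlow : Real.exp (-1) * Real.Gamma (α + x) ≤ ‖Complex.Gamma ((α:ℂ) + w + 1)‖ := by
      have h1 : 1 ≤ ((α:ℂ) + w + 1).re := by rw [hsre]; linarith
      have h2 : |((α:ℂ) + w + 1).im| ≤ 1 := by simpa using him
      have h3 := gamma_lower h1 h2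
      refine le_trans ?_ h3
      apply mul_le_mul_of_nonneg_left _ (Real.exp_pos _).le
      rw [hsre]
      exact Real.Gamma_strictMonoOn_Ici.monotoneOn (by exact hax2) (by simp; linarith)
        (by linarith)
    have hGpos : 0 < ‖Complex.Gamma ((α:ℂ) + w + 1)‖ :=
      lt_of_lt_of_le (by positivity) hGlow
    have hinv : ‖Complex.Gamma ((α:ℂ) + w + 1)‖⁻¹ ≤ Real.exp 1 / Real.Gamma (α + x) := by
      have h0 : 0 < Real.exp (-1) * Real.Gamma (α + x) := by positivity
      calc ‖Complex.Gamma ((α:ℂ) + w + 1)‖⁻¹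
          ≤ (Real.exp (-1) * Real.Gamma (α + x))⁻¹ := inv_anti₀ h0 hGlow
        _ = Real.exp 1 / Real.Gamma (α + x) := by
            rw [mul_inv, Real.exp_neg, inv_inv, div_eq_mul_inv]
    exact mul_le_mul hexp hinv (by positivity) (by positivity)
  have hcb := cauchy_bound (Fc_diff z α) m (x:ℂ) hM
  -- step 2 : Gamma growth
  have hGgrow : K ^ (x - X - 1) * Real.Gamma (α + X) ≤ Real.Gamma (α + x) := by
    set nn : ℕ := ⌊x - X⌋₊ with hnn
    have hxX : 0 ≤ x - X := by linarith
    have hn1 : (nn:ℝ) ≤ x - X := Nat.floor_le hxX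
    have hn2 : x - X < nn + 1 := Nat.lt_floor_add_one _
    set t : ℝ := α + x - nn with ht
    have htX : α + X ≤ t := by simp only [ht]; linarith
    have htK : K ≤ t := by
      have := neg_abs_le α
      simp only [ht, hXdef] at *; linarith
    have h1 : K ^ nn * Real.Gamma t ≤ Real.Gamma (t + nn) := gamma_step hK2 nn htK
    have h2 : t + nn = α + x := by simp only [ht]; ring
    rw [h2] at h1
    have h3 : Real.Gamma (α + X) ≤ Real.Gamma t := by
      rcases eq_or_lt_of_le htX with h | h
      · rw [h]
      · exact le_of_lt (Real.Gamma_strictMonoOn_Ici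
          (by simp only [hXdef]; simp; linarith [neg_abs_le α]) (by simp; linarith) h)
    have h4 : K ^ (x - X - 1) ≤ K ^ (nn:ℝ) := by
      apply Real.rpow_le_rpow_of_exponent_le (by linarith)
      linarith
    have h5 : K ^ ((nn:ℕ):ℝ) = K ^ (nn:ℕ) := Real.rpow_natCast K nn
    calc K ^ (x - X - 1) * Real.Gamma (α + X)
        ≤ K ^ (nn:ℝ) * Real.Gamma t := by
          apply mul_le_mul h4 h3 hGX.le (by positivity)
      _ = K ^ (nn:ℕ) * Real.Gamma t := by rw [← h5]
      _ ≤ Real.Gamma (α + x) := h1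
  -- step 3 : combine
  have hzx : Real.exp ((α + x) * Real.log z) = z ^ (α + x) := by
    rw [Real.rpow_def_of_pos hz, mul_comm]
  have hsplit : z ^ (α + x) = z ^ α * z ^ x := Real.rpow_add hz α x
  have hzK : z ^ x ≤ (1/2:ℝ) ^ x * K ^ x := by
    have h1 : z ^ x = (z/K * K) ^ x := by rw [div_mul_cancel₀ _ hKpos.ne']
    rw [h1, Real.mul_rpow (by positivity) hKpos.le]
    apply mul_le_mul_of_nonneg_right _ (Real.rpow_nonneg hKpos.le x)
    apply Real.rpow_le_rpow (by positivity) _ (by linarith)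
    rw [div_le_div_iff₀ hKpos two_pos]
    linarith
  have hfrac : z ^ x / Real.Gamma (α+x) ≤ (1/2:ℝ)^x * K^(X+1) / Real.Gamma (α+X) := by
    have hKe : (0:ℝ) < K ^ (x - X - 1) := Real.rpow_pos_of_pos hKpos _
    have h1 : z ^ x / Real.Gamma (α+x)
        ≤ ((1/2:ℝ)^x * K^x) / (K^(x-X-1) * Real.Gamma (α+X)) :=
      div_le_div₀ (by positivity) hzK (by positivity) hGgrow
    refine h1.trans (le_of_eq ?_)
    have h2 : K^x = K^(x-X-1) * K^(X+1) := by
      rw [← Real.rpow_add hKpos]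
      congr 1
      ring
    rw [h2]
    field_simp
  calc ‖iteratedDeriv m (Fc z α) (x:ℂ)‖
      ≤ (m ! : ℝ) * (Real.exp ((α + x) * Real.log z + |Real.log z|) *
          (Real.exp 1 / Real.Gamma (α + x))) := hcb
    _ = ((m ! : ℝ) * Real.exp (|Real.log z| + 1) * z ^ α) * (z ^ x / Real.Gamma (α + x)) := by
        rw [Real.exp_add, hzx, hsplit, Real.exp_add (|Real.log z|) 1]
        ring
    _ ≤ ((m ! : ℝ) * Real.exp (|Real.log z| + 1) * z ^ α)
          * ((1/2:ℝ)^x * K^(X+1) / Real.Gamma (α+X)) := by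
        apply mul_le_mul_of_nonneg_left hfrac (by positivity)
    _ = (m ! : ℝ) * (Real.exp (|Real.log z| + 1) * (z ^ α * K ^ (X+1) / Real.Gamma (α + X)))
          * (1/2:ℝ) ^ x := by ring


/-- For `n ∈ ℕ` and `z > 0`, the analytically continued Volterra
function at `β = −n−1`, given by the integration-by-parts representation
`μ(z,−n−1,α) = (−1)^{n+1} ∫₀^∞ d^{n+1}/dx^{n+1}( z^{α+x}/Γ(α+x+1) ) dx`
(the case `β = −n−1`, `m = n+1`, so `β+m = 0`), satisfies
`μ(z,−n−1,α) = (−1)^n dⁿ/dxⁿ[ z^{α+x}/Γ(α+x+1) ]` at `x = 0`. -/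
theorem volterra_negative_integer_beta (n : ℕ) (z α : ℝ)
    (hz : 0 < z) (hα : -1 < α) :
    (-1 : ℝ) ^ (n + 1) *
        (∫ x in Ioi (0 : ℝ),
          iteratedDeriv (n + 1)
            (fun x : ℝ => z ^ (α + x) / Real.Gamma (α + x + 1)) x) =
      (-1 : ℝ) ^ n *
        iteratedDeriv n (fun x : ℝ => z ^ (α + x) / Real.Gamma (α + x + 1)) 0 := by
  set f : ℝ → ℝ := fun x : ℝ => z ^ (α + x) / Real.Gamma (α + x + 1) with hf
  have hFd : Differentiable ℂ (Fc z α) := Fc_diff z α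
  have hFc : ContDiff ℂ ⊤ (Fc z α) := hFd.contDiff
  have hfeq : f = fun x : ℝ => (Fc z α x).re := by
    funext x
    rw [hf]
    simp only
    rw [Fc_real z α hz x, Complex.ofReal_re]
  have hcont : ContDiff ℝ ⊤ f := by
    rw [hfeq]; exact hFc.real_of_complex
  have hiter : ∀ k : ℕ, ∀ x : ℝ, iteratedDeriv k f x = (iteratedDeriv k (Fc z α) x).re := by
    intro k
    induction k with
    | zero => intro x; rw [hfeq]; simp
    | succ k ih =>
      intro x
      have hdF : DifferentiableAt ℂ (iteratedDeriv k (Fc z α)) x :=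
        (hFc.differentiable_iteratedDeriv k (by simp)).differentiableAt
      have hstep : HasDerivAt (iteratedDeriv k (Fc z α)) (iteratedDeriv (k+1) (Fc z α) x) x := by
        rw [iteratedDeriv_succ]
        exact hdF.hasDerivAt
      have hre := hstep.real_of_complex
      rw [iteratedDeriv_succ]
      have heq : iteratedDeriv k f = fun y : ℝ => (iteratedDeriv k (Fc z α) y).re := funext ih
      rw [heq]
      exact hre.deriv
  set g : ℝ → ℝ := iteratedDeriv n f with hg
  set g' : ℝ → ℝ := iteratedDeriv (n+1) f with hg'
  have hderiv : ∀ x ∈ Ici (0:ℝ), HasDerivAt g (g' x) x := by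
    intro x _
    have hd : DifferentiableAt ℝ g x :=
      (hcont.differentiable_iteratedDeriv n (by simp)).differentiableAt
    have h2 : deriv g x = g' x := by rw [hg', hg, iteratedDeriv_succ]
    rw [← h2]
    exact hd.hasDerivAt
  obtain ⟨C1, X1, hC1, hX1, hb1⟩ := decay z α hz n
  have htend : Tendsto g atTop (𝓝 0) := by
    apply squeeze_zero_norm' (a := fun x : ℝ => C1 * (1/2:ℝ)^x)
    · filter_upwards [eventually_ge_atTop X1] with x hx
      calc ‖g x‖ = |(iteratedDeriv n (Fc z α) (x:ℂ)).re| := by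
            rw [Real.norm_eq_abs, hg, hiter n x]
        _ ≤ ‖iteratedDeriv n (Fc z α) (x:ℂ)‖ := Complex.abs_re_le_norm _
        _ ≤ C1 * (1/2:ℝ)^x := hb1 x hx
    · have := (tendsto_rpow_atTop_of_base_lt_one (1/2) (by norm_num) (by norm_num)).const_mul C1
      simpa using this
  obtain ⟨C2, X2, hC2, hX2, hb2⟩ := decay z α hz (n+1)
  have hgcont : Continuous g' := hcont.continuous_iteratedDeriv (n+1) (by simp)
  have hhalf : ∀ x : ℝ, (1/2:ℝ)^x = Real.exp (-(Real.log 2) * x) := by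
    intro x
    rw [show (1:ℝ)/2 = (2:ℝ)⁻¹ by norm_num, Real.rpow_def_of_pos (by norm_num), Real.log_inv]
  have hint : IntegrableOn g' (Ioi (0:ℝ)) := by
    have hsplit : Ioi (0:ℝ) = Ioc 0 X2 ∪ Ioi X2 := (Ioc_union_Ioi_eq_Ioi (by linarith)).symm
    rw [hsplit]
    apply IntegrableOn.union
    · exact hgcont.integrableOn_Ioc
    · have hidom : IntegrableOn (fun x => C2 * Real.exp (-(Real.log 2) * x)) (Ioi X2) :=
        (exp_neg_integrableOn_Ioi X2 (Real.log_pos (by norm_num))).const_mul C2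
      apply Integrable.mono' hidom hgcont.aestronglyMeasurable.restrict
      filter_upwards [ae_restrict_mem measurableSet_Ioi] with x hx
      have hxX : X2 ≤ x := le_of_lt hx
      calc ‖g' x‖ = |(iteratedDeriv (n+1) (Fc z α) (x:ℂ)).re| := by
            rw [Real.norm_eq_abs, hg', hiter (n+1) x]
        _ ≤ ‖iteratedDeriv (n+1) (Fc z α) (x:ℂ)‖ := Complex.abs_re_le_norm _
        _ ≤ C2 * (1/2:ℝ)^x := hb2 x hxX
        _ = C2 * Real.exp (-(Real.log 2) * x) := by rw [hhalf]
  have hFTC : ∫ x in Ioi (0:ℝ), g' x = 0 - g 0 :=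
    integral_Ioi_of_hasDerivAt_of_tendsto' hderiv hint htend
  rw [hFTC, pow_succ]
  ring
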